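/- For a Kepler motion with nonzero angular momentum L = L e_z, whose hodograph is the circle of radius R = m²k/|L| centered at c = c e_y, the energy satisfies 2mE = ‖c‖² − R², i.e. twice m times the energy equals the power of the origin with respect to the hodograph circle. -/

import Mathlib

/-- The cross product on Euclidean 3-space. -/
noncomputable def cross (a b : EuclideanSpace ℝ (Fin 3)) : EuclideanSpace ℝ (Fin 3) :=
  WithLp.toLp 2 ![a 1 * b 2 - a 2 * b 1, a 2 * b 0 - a 0 * b 2, a 0 * b 1 - a 1 * b 0]

noncomputable def ex : EuclideanSpace ℝ (Fin 3) := EuclideanSpace.single 0 1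
noncomputable def ey : EuclideanSpace ℝ (Fin 3) := EuclideanSpace.single 1 1
noncomputable def ez : EuclideanSpace ℝ (Fin 3) := EuclideanSpace.single 2 1

lemma norm_sq_eq (x : EuclideanSpace ℝ (Fin 3)) :
    ‖x‖ ^ 2 = x 0 ^ 2 + x 1 ^ 2 + x 2 ^ 2 := by
  rw [EuclideanSpace.norm_eq, Real.sq_sqrt (by positivity)]
  simp [Fin.sum_univ_three, sq_abs]

/-- For a Kepler motion with nonzero angular momentum `r × p = L e_z`,
whose hodograph is the circle of radius `R = m²k/|L|` centered at `c e_y`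
(i.e. `p = (m²k/L)(-sin θ e_x + cos θ e_y) + c e_y`), the energy satisfies
`2mE = c² - R²`: twice `m` times the energy is the power of the origin with
respect to the hodograph circle. -/
theorem kepler_energy_power_of_origin
    (m k L c : ℝ) (hm : 0 < m) (hk : 0 < k) (hL : L ≠ 0)
    (r p : ℝ → EuclideanSpace ℝ (Fin 3))
    (hr0 : ∀ t, r t ≠ 0)
    (hr : ∀ t, HasDerivAt r ((1 / m) • p t) t)
    (hp : ∀ t, HasDerivAt p (-(k * m / ‖r t‖ ^ 3) • r t) t)
    (hang : ∀ t, cross (r t) (p t) = L • ez)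
    (θ : ℝ → ℝ) (hθdiff : Differentiable ℝ θ)
    (hθ : ∀ t, r t = ‖r t‖ • (Real.cos (θ t) • ex + Real.sin (θ t) • ey))
    (hhodo : ∀ t, p t =
      (m ^ 2 * k / L) • (-Real.sin (θ t) • ex + Real.cos (θ t) • ey) + c • ey) :
    ∀ t, 2 * m * (‖p t‖ ^ 2 / (2 * m) - m * k / ‖r t‖) =
      c ^ 2 - (m ^ 2 * k / |L|) ^ 2 := by
  intro t
  set n := ‖r t‖ with hn
  have hnpos : 0 < n := norm_pos_iff.mpr (hr0 t)
  set R0 : ℝ := m ^ 2 * k / L with hR0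
  set s := Real.sin (θ t)
  set co := Real.cos (θ t)
  have hr0c : r t 0 = n * co := by
    have := congrArg (fun v => v 0) (hθ t)
    simpa [ex, ey, EuclideanSpace.single_apply, mul_comm] using this
  have hr1c : r t 1 = n * s := by
    have := congrArg (fun v => v 1) (hθ t)
    simpa [ex, ey, EuclideanSpace.single_apply, mul_comm] using this
  have hp0 : p t 0 = -(R0 * s) := by
    have := congrArg (fun v => v 0) (hhodo t)
    simpa [ex, ey, EuclideanSpace.single_apply, mul_comm] using this
  have hp1 : p t 1 = R0 * co + c := by
    have := congrArg (fun v => v 1) (hhodo t)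
    simpa [ex, ey, EuclideanSpace.single_apply, mul_comm] using this
  have hp2 : p t 2 = 0 := by
    have := congrArg (fun v => v 2) (hhodo t)
    simpa [ex, ey, EuclideanSpace.single_apply] using this
  have hangz : r t 0 * p t 1 - r t 1 * p t 0 = L := by
    have := congrArg (fun v => v 2) (hang t)
    simpa [cross, ez, EuclideanSpace.single_apply] using this
  have htrig : s ^ 2 + co ^ 2 = 1 := Real.sin_sq_add_cos_sq (θ t)
  have hLval : n * (R0 + c * co) = L := by
    rw [hr0c, hr1c, hp0, hp1] at hangz
    linear_combination hangz - n * R0 * htrig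
  have hpn : ‖p t‖ ^ 2 = R0 ^ 2 + 2 * R0 * c * co + c ^ 2 := by
    rw [norm_sq_eq, hp0, hp1, hp2]; nlinarith
  have hm2k : m ^ 2 * k = R0 * L := by
    rw [hR0, div_mul_cancel₀ _ hL]
  have hLsq : (m ^ 2 * k / |L|) ^ 2 = R0 ^ 2 := by
    rw [div_pow, sq_abs, hR0, div_pow]
  rw [hLsq, hpn]
  have hLsub : n * R0 + n * (c * co) = L := by linarith [hLval, (mul_add n R0 (c*co)).symm ▸ hLval]
  have hkey : m ^ 2 * k = R0 * (n * R0 + n * (c * co)) := by rw [hLsub, hm2k]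
  field_simp
  nlinarith [hkey, hnpos]
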